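/- There exists a constant C > 0, depending only on the Lipschitz constant of σ and on σ^*, such that for every δ > 0 and all f, g ∈ L¹(V) with f ≥ 0 almost everywhere, one has ∫_V φ_δ'(f(v) − g(v))·[σ(⟨f⟩)L(f)(v) − σ(⟨g⟩)L(g)(v)] dv ≤ C(1 + ‖f‖_{L¹(V)})·δ. -/

import Mathlib

/- STATEMENT 2: There is a constant `C > 0` (depending only on the Lipschitz constant of
`σ` and on `σ^*`) such that for every `δ > 0` and all `f, g ∈ L¹(V)` with `f ≥ 0` a.e.,
`∫_V φ_δ'(f − g) [σ(⟨f⟩)L(f) − σ(⟨g⟩)L(g)] dv ≤ C (1 + ‖f‖_{L¹}) δ`,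
where `φ_δ'(x) = ψ(x/δ)` for a fixed smooth non-decreasing `ψ` with `ψ = 0` on `(-∞,0]`,
`ψ = 1` on `[1,∞)` and `0 < ψ < 1` on `(0,1)`. -/

open MeasureTheory

noncomputable section

/-- The `N`-dimensional torus with its (normalized) Lebesgue measure. -/
abbrev Torus (N : ℕ) := Fin N → AddCircle (1 : ℝ)

theorem torus_isProbabilityMeasure (N : ℕ) :
    IsProbabilityMeasure (volume : Measure (Torus N)) := by
  constructor
  rw [MeasureTheory.volume_pi, MeasureTheory.Measure.pi_univ]
  simp [AddCircle.measure_univ]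

theorem accretivity_smooth_approx
    (N : ℕ) (σ : ℝ → ℝ) (σstar σStar : ℝ) (K : NNReal)
    (hσstar : 0 < σstar) (hσStar : 0 < σStar)
    (hσbound : ∀ y : ℝ, σstar ≤ σ y ∧ σ y ≤ σStar)
    (hσlip : LipschitzWith K σ)
    (hσanti : Antitone σ)
    (hσmono : Monotone fun y : ℝ => σ y * y)
    (ψ : ℝ → ℝ) (hψC2 : ContDiff ℝ 2 ψ) (hψmono : Monotone ψ)
    (hψ0 : ∀ x : ℝ, x ≤ 0 → ψ x = 0) (hψ1 : ∀ x : ℝ, 1 ≤ x → ψ x = 1)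
    (hψmid : ∀ x ∈ Set.Ioo (0 : ℝ) 1, 0 < ψ x ∧ ψ x < 1) :
    ∃ C > (0 : ℝ), ∀ δ > (0 : ℝ), ∀ f g : Torus N → ℝ,
      Integrable f → Integrable g → 0 ≤ᵐ[volume] f →
      ∫ v, ψ ((f v - g v) / δ) *
          (σ (∫ w, f w) * ((∫ w, f w) - f v) - σ (∫ w, g w) * ((∫ w, g w) - g v))
        ≤ C * (1 + ∫ v, |f v|) * δ := by
  have hprob := torus_isProbabilityMeasure N
  refine ⟨σStar, hσStar, ?_⟩
  intro δ hδ f g hf hg hf0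
  -- basic facts about ψ
  have hψnn : ∀ x : ℝ, 0 ≤ ψ x := by
    intro x
    rcases le_or_gt x 0 with hx | hx
    · rw [hψ0 x hx]
    · rw [← hψ0 0 le_rfl]; exact hψmono hx.le
  have hψle1 : ∀ x : ℝ, ψ x ≤ 1 := by
    intro x
    rcases le_or_gt 1 x with hx | hx
    · rw [hψ1 x hx]
    · rw [← hψ1 1 le_rfl]; exact hψmono hx.le
  have hψxx : ∀ x : ℝ, 0 ≤ ψ (x / δ) * x := by
    intro x
    rcases le_or_gt x 0 with hx | hx
    · rw [hψ0 (x / δ) (div_nonpos_of_nonpos_of_nonneg hx hδ.le), zero_mul]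
    · exact mul_nonneg (hψnn _) hx.le
  have hψxx' : ∀ x : ℝ, x - δ ≤ ψ (x / δ) * x := by
    intro x
    rcases le_or_gt δ x with hx | hx
    · rw [hψ1 (x / δ) ((one_le_div hδ).mpr hx), one_mul]; linarith
    · have := hψxx x; linarith
  set a := ∫ w, f w with ha
  set b := ∫ w, g w with hb
  set h : Torus N → ℝ := fun v => ψ ((f v - g v) / δ) with hhdef
  -- measurability & integrability
  have hfg : Integrable (fun v => f v - g v) := hf.sub hg
  have hmeas : AEStronglyMeasurable h volume :=
    (hψC2.continuous.comp (continuous_id.div_const δ)).comp_aestronglyMeasurable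
      hfg.aestronglyMeasurable
  have hbdd : ∀ v, ‖h v‖ ≤ 1 := by
    intro v
    rw [Real.norm_eq_abs, abs_le]
    exact ⟨by linarith [hψnn ((f v - g v) / δ)], hψle1 _⟩
  have hinth : Integrable h := by
    refine (integrable_const (1 : ℝ)).mono' hmeas ?_
    exact Filter.Eventually.of_forall hbdd
  have hinthf : Integrable (fun v => h v * f v) := hf.bdd_mul hmeas (Filter.Eventually.of_forall hbdd)
  have hinthfg : Integrable (fun v => h v * (f v - g v)) :=
    hfg.bdd_mul hmeas (Filter.Eventually.of_forall hbdd)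
  -- split the integral
  have hsplit : (∫ v, ψ ((f v - g v) / δ) *
      (σ a * (a - f v) - σ b * (b - g v)))
      = (σ a * a - σ b * b) * (∫ v, h v) - ((σ a - σ b) * (∫ v, h v * f v)
        + σ b * (∫ v, h v * (f v - g v))) := by
    have e1 : ∀ v : Torus N, ψ ((f v - g v) / δ) *
        (σ a * (a - f v) - σ b * (b - g v))
        = (σ a * a - σ b * b) * h v
          - ((σ a - σ b) * (h v * f v) + σ b * (h v * (f v - g v))) := by
      intro v; simp only [hhdef]; ring
    have hI1 : Integrable (fun v => (σ a * a - σ b * b) * h v) := hinth.const_mul _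
    have hI2a : Integrable (fun v => (σ a - σ b) * (h v * f v)) := hinthf.const_mul _
    have hI2b : Integrable (fun v => σ b * (h v * (f v - g v))) := hinthfg.const_mul _
    have hI2 : Integrable (fun v => (σ a - σ b) * (h v * f v)
        + σ b * (h v * (f v - g v))) := hI2a.add hI2b
    simp only [e1]
    rw [integral_sub hI1 hI2, integral_add hI2a hI2b,
      integral_const_mul, integral_const_mul, integral_const_mul]
  rw [hsplit]
  -- bounds on the three integrals
  have hA0 : 0 ≤ ∫ v, h v := integral_nonneg fun v => hψnn _
  have hA1 : (∫ v, h v) ≤ 1 := by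
    have := integral_mono hinth (integrable_const (1 : ℝ)) fun v => hψle1 _
    simpa using this
  have hB0 : 0 ≤ ∫ v, h v * f v :=
    integral_nonneg_of_ae (hf0.mono fun v hv => mul_nonneg (hψnn _) hv)
  have hBa : (∫ v, h v * f v) ≤ a := by
    refine integral_mono_ae hinthf hf (hf0.mono fun v hv => ?_)
    exact mul_le_of_le_one_left hv (hψle1 _)
  have hC0 : 0 ≤ ∫ v, h v * (f v - g v) := integral_nonneg fun v => hψxx _
  have hClb : a - b - δ ≤ ∫ v, h v * (f v - g v) := by
    have h1 : (∫ v, (f v - g v - δ)) ≤ ∫ v, h v * (f v - g v) :=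
      integral_mono (hfg.sub (integrable_const δ)) hinthfg fun v => hψxx' _
    have h2 : (∫ v, (f v - g v - δ)) = a - b - δ := by
      rw [integral_sub hfg (integrable_const δ), integral_sub hf hg, integral_const]
      simp [ha, hb]
    linarith
  have hF0 : 0 ≤ ∫ v, |f v| := integral_nonneg fun v => abs_nonneg _
  have ha0 : 0 ≤ a := integral_nonneg_of_ae hf0
  have hσbS := (hσbound b).2
  have hσbs := le_trans hσstar.le (hσbound b).1
  -- case analysis
  rcases le_total a b with hab | hba
  · -- a ≤ b : everything is nonpositive
    have hs : σ a * a - σ b * b ≤ 0 := by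
      have := hσmono hab; simpa using sub_nonpos.mpr this
    have hσ : σ b ≤ σ a := hσanti hab
    have t1 : (σ a * a - σ b * b) * (∫ v, h v) ≤ 0 :=
      mul_nonpos_of_nonpos_of_nonneg hs hA0
    have t2 : 0 ≤ (σ a - σ b) * (∫ v, h v * f v) :=
      mul_nonneg (by linarith) hB0
    have t3 : 0 ≤ σ b * (∫ v, h v * (f v - g v)) :=
      mul_nonneg (by linarith) hC0
    have hrhs : 0 ≤ σStar * (1 + ∫ v, |f v|) * δ :=
      mul_nonneg (mul_nonneg hσStar.le (by linarith)) hδ.le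
    linarith
  · -- b ≤ a
    have hs : 0 ≤ σ a * a - σ b * b := by
      have := hσmono hba; simpa using sub_nonneg.mpr this
    have hσ : σ a ≤ σ b := hσanti hba
    have t1 : (σ a * a - σ b * b) * (∫ v, h v) ≤ σ a * a - σ b * b := by
      have := mul_le_mul_of_nonneg_left hA1 hs
      linarith
    have t2 : (σ b - σ a) * (∫ v, h v * f v) ≤ (σ b - σ a) * a :=
      mul_le_mul_of_nonneg_left hBa (by linarith)
    have t3 : σ b * (a - b - δ) ≤ σ b * (∫ v, h v * (f v - g v)) :=
      mul_le_mul_of_nonneg_left hClb (by linarith)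
    have key : (σ a * a - σ b * b) * (∫ v, h v) - ((σ a - σ b) * (∫ v, h v * f v)
        + σ b * (∫ v, h v * (f v - g v))) ≤ σ b * δ := by linarith
    have last : σ b * δ ≤ σStar * (1 + ∫ v, |f v|) * δ := by
      nlinarith [mul_nonneg (mul_nonneg hσStar.le hF0) hδ.le,
        mul_nonneg (sub_nonneg.mpr hσbS) hδ.le]
    linarith
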